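/- Let H be a complex Hilbert space and let A be a norm-closed *-subalgebra of the C*-algebra B(H) of bounded operators on H. Suppose a ∈ A is self-adjoint, v ∈ B(H), and v·a ∈ A. Then for every continuous function f : ℝ → ℝ with f(0) = 0, the operator v·f(a) belongs to A, where f(a) is given by the continuous functional calculus applied to the self-adjoint operator a. -/

import Mathlib

open scoped ContinuousMapZero

/-- If `A` is a norm-closed *-subalgebra of `B(H)`, `a ∈ A` is self-adjoint, `v ∈ B(H)` and
`v·a ∈ A`, then `v·f(a) ∈ A` for every continuous `f : ℝ → ℝ` with `f 0 = 0`, where `f(a)` is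
given by the continuous functional calculus. -/
theorem stmt_7 {H : Type*} [NormedAddCommGroup H] [InnerProductSpace ℂ H] [CompleteSpace H]
    (S : NonUnitalStarSubalgebra ℂ (H →L[ℂ] H)) (hS : IsClosed (S : Set (H →L[ℂ] H)))
    (a : H →L[ℂ] H) (haS : a ∈ S) (hsa : IsSelfAdjoint a)
    (v : H →L[ℂ] H) (hva : v * a ∈ S)
    (f : ℝ → ℝ) (hf : Continuous f) (hf0 : f 0 = 0) :
    v * cfc f a ∈ S := by
  rw [← cfcₙ_eq_cfc (f := f) (a := a)]
  have hcont : ContinuousOn f (quasispectrum ℝ a) := hf.continuousOn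
  rw [cfcₙ_apply f a hcont hf0 hsa]
  have h0 : ((0 : quasispectrum ℝ a) : ℝ) = 0 := rfl
  have hsmul : ∀ (r : ℝ) (x : H →L[ℂ] H), x ∈ S → r • x ∈ S := by
    intro r x hx
    have : r • x = (r : ℂ) • x := by
      simp [Complex.coe_smul]
    rw [this]
    exact S.smul_mem (r : ℂ) hx
  have key : ∀ g : C(quasispectrum ℝ a, ℝ)₀,
      v * cfcₙHom (R := ℝ) hsa g ∈ S ∧ cfcₙHom (R := ℝ) hsa g ∈ S := by
    intro g
    induction g using ContinuousMapZero.induction_on_of_compact with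
    | zero => simp only [map_zero, mul_zero]; exact ⟨S.zero_mem, S.zero_mem⟩
    | id =>
        have hid : cfcₙHom (R := ℝ) hsa (ContinuousMapZero.id (quasispectrum ℝ a)) = a := by
          have := cfcₙHom_id (R := ℝ) hsa
          convert this using 2
        rw [hid]; exact ⟨hva, haS⟩
    | star_id =>
        have hstar : star (ContinuousMapZero.id (quasispectrum ℝ a)) = ContinuousMapZero.id (quasispectrum ℝ a) := by
          ext x; simp
        rw [hstar]
        have hid : cfcₙHom (R := ℝ) hsa (ContinuousMapZero.id (quasispectrum ℝ a)) = a := by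
          have := cfcₙHom_id (R := ℝ) hsa
          convert this using 2
        rw [hid]; exact ⟨hva, haS⟩
    | add g₁ g₂ h₁ h₂ =>
        rw [map_add, mul_add]
        exact ⟨S.add_mem h₁.1 h₂.1, S.add_mem h₁.2 h₂.2⟩
    | mul g₁ g₂ h₁ h₂ =>
        rw [map_mul, ← mul_assoc]
        exact ⟨S.mul_mem h₁.1 h₂.2, S.mul_mem h₁.2 h₂.2⟩
    | smul r g h =>
        rw [map_smul, mul_smul_comm]
        exact ⟨hsmul r _ h.1, hsmul r _ h.2⟩
    | frequently g h =>
        have hset : IsClosed {g : C(quasispectrum ℝ a, ℝ)₀ |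
            v * cfcₙHom (R := ℝ) hsa g ∈ S ∧ cfcₙHom (R := ℝ) hsa g ∈ S} := by
          apply IsClosed.inter
          · exact hS.preimage (by fun_prop)
          · exact hS.preimage (by fun_prop)
        exact h.mem_of_closed hset
  exact (key _).1
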